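/- arXiv:2309.03810 — 2 statements merged into one kernel-verified Lean document; each statement's English description precedes it below -/
import Mathlib

section
/- Let k ≥ 2, let G_k be a 3-regular bipartite graph on 2k vertices with bipartition into independent sets A and B of size k, and let Ĝ_k, Ĥ_k be the graphs constructed from G_k and H_k as described. Let π : V(Ĝ_k) → V(Ĥ_k) be a bijection. Then: (1) if x is a pendant leaf of Ĝ_k (i.e., x ∈ Q_A ∪ Q_B) and π(x) ∈ V(H_k), then MMC(π) > 6; (2) if x ∈ A and π(x) ∈ Odd(2k), then MMC(π) > 6; (3) if π is (G_k, H_k)-conservative with π(A) = Even(2k) and π(B) = Odd(2k), and its restriction σ to V(G_k) satisfies π(v^[i]) = σ(v)^[i] for every v ∈ V(G_k) and every admissible index i, then MMC(π) = MMC(σ) ≤ 6, where MMC(σ) is computed for the mismatch graph G_k^σ − H_k. -/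
open SimpleGraph

section MismatchDefs

variable {V W : Type*}

/-- The mismatch graph `G^π − H`: the symmetric difference of the image of `G` under the
bijection `π` with `H`, as a graph on `V(H)`. Its edges are the positive edges
(edges of `G^π` not in `H`) together with the negative edges (edges of `H` not in `G^π`). -/
def mismatchGraph (G : SimpleGraph V) (H : SimpleGraph W) (π : V ≃ W) : SimpleGraph W :=
  symmDiff (G.map π.toEmbedding) H

/-- The degree of a vertex in the mismatch graph `G^π − H`. -/
noncomputable def mismatchDeg (G : SimpleGraph V) (H : SimpleGraph W) (π : V ≃ W) (x : W) : ℕ :=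
  ((mismatchGraph G H π).neighborSet x).ncard

/-- The number of positive edges of `G^π − H` incident to `x`. -/
noncomputable def posDeg (G : SimpleGraph V) (H : SimpleGraph W) (π : V ≃ W) (x : W) : ℕ :=
  ((G.map π.toEmbedding).neighborSet x \ H.neighborSet x).ncard

/-- The number of negative edges of `G^π − H` incident to `x`. -/
noncomputable def negDeg (G : SimpleGraph V) (H : SimpleGraph W) (π : V ≃ W) (x : W) : ℕ :=
  (H.neighborSet x \ (G.map π.toEmbedding).neighborSet x).ncard

/-- The maximum mismatch count `MMC(π)`: the maximum degree of the mismatch graph `G^π − H`. -/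
noncomputable def MMC [Fintype W] (G : SimpleGraph V) (H : SimpleGraph W) (π : V ≃ W) : ℕ :=
  Finset.univ.sup (mismatchDeg G H π)

/-- The edit mismatch norm `μ_edit(G^π, H)`: the number of edges of the mismatch graph. -/
noncomputable def muEdit (G : SimpleGraph V) (H : SimpleGraph W) (π : V ≃ W) : ℕ :=
  (mismatchGraph G H π).edgeSet.ncard

/-- The edit distance `δ_edit(G, H)`: the minimum of `μ_edit(G^π, H)` over all bijections. -/
noncomputable def deltaEdit (G : SimpleGraph V) (H : SimpleGraph W) : ℕ :=
  ⨅ π : V ≃ W, muEdit G H π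

open Classical in
/-- The signed adjacency matrix of the mismatch graph `G^π − H`:
`+1` on positive edges, `−1` on negative edges, `0` otherwise. -/
noncomputable def signedAdj (G : SimpleGraph V) (H : SimpleGraph W) (π : V ≃ W) :
    Matrix W W ℝ := fun x y =>
  if (G.map π.toEmbedding).Adj x y ∧ ¬ H.Adj x y then 1
  else if H.Adj x y ∧ ¬ (G.map π.toEmbedding).Adj x y then -1 else 0

/-- The `ℓ_p` norm of a vector over a finite index type. -/
noncomputable def lpNorm [Fintype W] (p : ℝ) (x : W → ℝ) : ℝ :=
  (∑ i, |x i| ^ p) ^ p⁻¹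

/-- The `ℓ_p`-operator norm of a matrix: `sup_{x ≠ 0} ‖Mx‖_p / ‖x‖_p`. -/
noncomputable def lpOpNorm [Fintype W] (p : ℝ) (M : Matrix W W ℝ) : ℝ :=
  ⨆ x : {x : W → ℝ // x ≠ 0}, lpNorm p (M.mulVec x.1) / lpNorm p x.1

end MismatchDefs

/-- The graph `H_k` on vertex set `{0, 1, …, 2k−1}`: the Hamiltonian cycle
`0 − 1 − ⋯ − (2k−1) − 0` together with, for even `k`, the chords `{i, i+2}` for
`i ≡ 0, 1 (mod 4)`, and for odd `k`, the chords `{i, i−2}` for `i ≡ 2 (mod 4)`,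
`{i, i+2}` for `i ≡ 3 (mod 4)`, and `{2k−2, 1}`. -/
def Hk (k : ℕ) : SimpleGraph (Fin (2 * k)) :=
  SimpleGraph.fromRel (fun a b =>
    (b.val = a.val + 1) ∨ (a.val = 2 * k - 1 ∧ b.val = 0) ∨
    (if k % 2 = 0 then
      (a.val % 4 = 0 ∨ a.val % 4 = 1) ∧ b.val = a.val + 2
    else
      (a.val % 4 = 2 ∧ b.val = a.val - 2) ∨ (a.val % 4 = 3 ∧ b.val = a.val + 2) ∨
        (a.val = 2 * k - 2 ∧ b.val = 1)))

/-- Attach `5` new pendant leaves to every vertex satisfying `P` and `12` new pendant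
leaves to every other vertex. The leaves of `v` are `Sum.inr ⟨v, i⟩`. -/
def hatGraph {V : Type*} (G : SimpleGraph V) (P : V → Prop) [DecidablePred P] :
    SimpleGraph (V ⊕ Σ v : V, Fin (if P v then 5 else 12)) :=
  SimpleGraph.fromRel (fun a b =>
    match a, b with
    | Sum.inl u, Sum.inl v => G.Adj u v
    | Sum.inl u, Sum.inr x => u = x.1
    | _, _ => False)

/-- `σ ∈ Res(G_k, H_k)`: the bijection `σ` maps the independent set `A` onto the even
vertices `Even(2k)` (and hence its complement `B` onto the odd vertices `Odd(2k)`). -/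
def InRes {V : Type*} (k : ℕ) (A : Finset V) (σ : V ≃ Fin (2 * k)) : Prop :=
  ∀ v, v ∈ A ↔ (σ v).val % 2 = 0


section AuxA
variable {V W : Type*}

lemma mapEquiv_adj (G : SimpleGraph V) (e : V ≃ W) (x y : W) :
    (G.map e.toEmbedding).Adj x y ↔ G.Adj (e.symm x) (e.symm y) := by
  simp only [SimpleGraph.map_adj, Equiv.coe_toEmbedding]
  constructor
  · rintro ⟨-, u, v, h, rfl, rfl⟩
    simpa using h
  · intro h
    exact ⟨fun hxy => h.ne (by rw [hxy]), _, _, h, e.apply_symm_apply x, e.apply_symm_apply y⟩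

lemma mapEquiv_nbr (G : SimpleGraph V) (e : V ≃ W) (x : W) :
    (G.map e.toEmbedding).neighborSet x = e '' (G.neighborSet (e.symm x)) := by
  ext y
  simp only [mem_neighborSet, mapEquiv_adj, Set.mem_image]
  constructor
  · intro h; exact ⟨e.symm y, h, e.apply_symm_apply y⟩
  · rintro ⟨v, h, rfl⟩; simpa using h

lemma mapEquiv_nbr_ncard (G : SimpleGraph V) (e : V ≃ W) (x : W) :
    ((G.map e.toEmbedding).neighborSet x).ncard = (G.neighborSet (e.symm x)).ncard := by
  rw [mapEquiv_nbr, Set.ncard_image_of_injective _ e.injective]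

lemma mismatch_adj (G : SimpleGraph V) (H : SimpleGraph W) (π : V ≃ W) (x y : W) :
    (mismatchGraph G H π).Adj x y ↔
      (G.Adj (π.symm x) (π.symm y) ∧ ¬ H.Adj x y) ∨
      (H.Adj x y ∧ ¬ G.Adj (π.symm x) (π.symm y)) := by
  rw [mismatchGraph, symmDiff_def]
  simp only [sup_adj, sdiff_adj, mapEquiv_adj]

lemma mismatch_nbr (G : SimpleGraph V) (H : SimpleGraph W) (π : V ≃ W) (x : W) :
    (mismatchGraph G H π).neighborSet x =
      ((G.map π.toEmbedding).neighborSet x \ H.neighborSet x) ∪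
      (H.neighborSet x \ (G.map π.toEmbedding).neighborSet x) := by
  ext y
  simp only [mem_neighborSet, Set.mem_union, Set.mem_diff, mismatchGraph, symmDiff_def,
    sup_adj, sdiff_adj]

lemma le_mismatchDeg [Finite W] (G : SimpleGraph V) (H : SimpleGraph W) (π : V ≃ W) (x : W) :
    (H.neighborSet x).ncard - ((G.map π.toEmbedding).neighborSet x).ncard
      ≤ mismatchDeg G H π x := by
  set NG := (G.map π.toEmbedding).neighborSet x with hNG
  have h1 : H.neighborSet x \ NG ⊆ (mismatchGraph G H π).neighborSet x := by
    rw [mismatch_nbr]; exact Set.subset_union_right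
  have h2 := Set.ncard_le_ncard h1 (Set.toFinite _)
  have h3 : (H.neighborSet x).ncard ≤ (H.neighborSet x \ NG).ncard + NG.ncard := by
    refine le_trans (Set.ncard_le_ncard ?_ (Set.toFinite _)) (Set.ncard_union_le _ _)
    intro y hy
    by_cases h : y ∈ NG
    · exact Or.inr h
    · exact Or.inl ⟨hy, h⟩
  unfold mismatchDeg
  omega

lemma mismatchDeg_le [Finite W] (G : SimpleGraph V) (H : SimpleGraph W) (π : V ≃ W) (x : W) :
    mismatchDeg G H π x ≤
      ((G.map π.toEmbedding).neighborSet x).ncard + (H.neighborSet x).ncard := by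
  refine le_trans (Set.ncard_le_ncard ?_ (Set.toFinite _)) (Set.ncard_union_le _ _)
  rw [mismatch_nbr]
  exact Set.union_subset_union Set.diff_subset Set.diff_subset

end AuxA

def nxtVal (k w : ℕ) : ℕ := if w = 2 * k - 1 then 0 else w + 1
def prvVal (k w : ℕ) : ℕ := if w = 0 then 2 * k - 1 else w - 1
def chdVal (k w : ℕ) : ℕ :=
  if k % 2 = 0 then (if w % 4 ≤ 1 then w + 2 else w - 2)
  else if w % 4 = 0 then (if w = 2 * k - 2 then 1 else w + 2)
  else if w % 4 = 1 then (if w = 1 then 2 * k - 2 else w - 2)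
  else if w % 4 = 2 then w - 2
  else w + 2

lemma nxtVal_lt {k w : ℕ} (hk : 2 ≤ k) (hw : w < 2 * k) : nxtVal k w < 2 * k := by
  unfold nxtVal; split_ifs <;> omega

lemma prvVal_lt {k w : ℕ} (hk : 2 ≤ k) (hw : w < 2 * k) : prvVal k w < 2 * k := by
  unfold prvVal; split_ifs <;> omega

lemma chdVal_lt {k w : ℕ} (hk : 2 ≤ k) (hw : w < 2 * k) : chdVal k w < 2 * k := by
  unfold chdVal; split_ifs <;> omega

set_option maxHeartbeats 1000000 in
lemma Hk_adj_val {k : ℕ} (hk : 2 ≤ k) {w y : Fin (2 * k)} (h : (Hk k).Adj w y) :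
    y.val = nxtVal k w.val ∨ y.val = prvVal k w.val ∨ y.val = chdVal k w.val := by
  have hw := w.isLt; have hy := y.isLt
  rw [Hk, SimpleGraph.fromRel_adj] at h
  obtain ⟨hne, h⟩ := h
  have hne' : ¬ w.val = y.val := fun hh => hne (Fin.ext hh)
  simp only [nxtVal, prvVal, chdVal]
  by_cases hpar : k % 2 = 0 <;>
    [simp only [if_pos hpar] at h ⊢; simp only [if_neg hpar] at h ⊢] <;>
    split_ifs <;> omega

set_option maxHeartbeats 1000000 in
lemma Hk_adj_of_val {k : ℕ} (hk : 2 ≤ k) {w y : Fin (2 * k)}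
    (h : y.val = nxtVal k w.val ∨ y.val = prvVal k w.val ∨ y.val = chdVal k w.val) :
    (Hk k).Adj w y := by
  have hw := w.isLt; have hy := y.isLt
  rw [Hk, SimpleGraph.fromRel_adj]
  simp only [ne_eq, Fin.ext_iff]
  simp only [nxtVal, prvVal, chdVal] at h
  by_cases hpar : k % 2 = 0 <;>
    [simp only [if_pos hpar] at h ⊢; simp only [if_neg hpar] at h ⊢] <;>
    obtain h | h | h := h <;> split_ifs at h <;>
      first
        | exact ⟨by omega, Or.inl (by omega)⟩
        | exact ⟨by omega, Or.inr (by omega)⟩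

lemma Hk_nbr_vals_distinct {k : ℕ} (hk : 2 ≤ k) {w : ℕ} (hw : w < 2 * k) :
    nxtVal k w ≠ prvVal k w ∧ nxtVal k w ≠ chdVal k w ∧ prvVal k w ≠ chdVal k w := by
  simp only [nxtVal, prvVal, chdVal]
  split_ifs <;> omega

lemma Hk_deg_le {k : ℕ} (hk : 2 ≤ k) (w : Fin (2 * k)) :
    ((Hk k).neighborSet w).ncard ≤ 3 := by
  have hw := w.isLt
  have hsub : (Hk k).neighborSet w ⊆
      {(⟨nxtVal k w.val, nxtVal_lt hk hw⟩ : Fin (2 * k)),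
       ⟨prvVal k w.val, prvVal_lt hk hw⟩, ⟨chdVal k w.val, chdVal_lt hk hw⟩} := by
    intro y hy
    rcases Hk_adj_val hk hy with h | h | h
    · exact Or.inl (Fin.ext h)
    · exact Or.inr (Or.inl (Fin.ext h))
    · exact Or.inr (Or.inr (Fin.ext h))
  refine le_trans (Set.ncard_le_ncard hsub (Set.toFinite _)) ?_
  refine le_trans (Set.ncard_insert_le _ _) ?_
  have := Set.ncard_insert_le (⟨prvVal k w.val, prvVal_lt hk hw⟩ : Fin (2*k))
    ({⟨chdVal k w.val, chdVal_lt hk hw⟩} : Set (Fin (2*k)))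
  simp only [Set.ncard_singleton] at this ⊢
  omega

lemma Hk_deg_ge {k : ℕ} (hk : 2 ≤ k) (w : Fin (2 * k)) :
    3 ≤ ((Hk k).neighborSet w).ncard := by
  have hw := w.isLt
  obtain ⟨h1, h2, h3⟩ := Hk_nbr_vals_distinct hk hw
  set a : Fin (2*k) := ⟨nxtVal k w.val, nxtVal_lt hk hw⟩ with ha
  set b : Fin (2*k) := ⟨prvVal k w.val, prvVal_lt hk hw⟩ with hb
  set c : Fin (2*k) := ⟨chdVal k w.val, chdVal_lt hk hw⟩ with hc
  have hsub : ({a, b, c} : Set (Fin (2*k))) ⊆ (Hk k).neighborSet w := by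
    intro y hy
    rcases hy with rfl | rfl | rfl
    · exact Hk_adj_of_val hk (Or.inl rfl)
    · exact Hk_adj_of_val hk (Or.inr (Or.inl rfl))
    · exact Hk_adj_of_val hk (Or.inr (Or.inr rfl))
  have hcard : ({a, b, c} : Set (Fin (2*k))).ncard = 3 := by
    rw [Set.ncard_eq_three]
    exact ⟨a, b, c, fun h => h1 (congrArg Fin.val h), fun h => h2 (congrArg Fin.val h),
      fun h => h3 (congrArg Fin.val h), rfl⟩
  calc (3:ℕ) = ({a, b, c} : Set (Fin (2*k))).ncard := hcard.symm
    _ ≤ _ := Set.ncard_le_ncard hsub (Set.toFinite _)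

section HatLemmas
variable {V : Type*} (G : SimpleGraph V) (P : V → Prop) [DecidablePred P]

lemma hat_adj_inl_inl (u v : V) :
    (hatGraph G P).Adj (Sum.inl u) (Sum.inl v) ↔ G.Adj u v := by
  rw [hatGraph, SimpleGraph.fromRel_adj]
  constructor
  · rintro ⟨-, h | h⟩
    · exact h
    · exact h.symm
  · intro h
    exact ⟨by simp [h.ne], Or.inl h⟩

lemma hat_adj_inl_inr (u : V) (x : Σ v : V, Fin (if P v then 5 else 12)) :
    (hatGraph G P).Adj (Sum.inl u) (Sum.inr x) ↔ u = x.1 := by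
  rw [hatGraph, SimpleGraph.fromRel_adj]
  constructor
  · rintro ⟨-, h | h⟩
    · exact h
    · exact h.elim
  · intro h
    exact ⟨by simp, Or.inl h⟩

lemma hat_adj_inr_inl (u : V) (x : Σ v : V, Fin (if P v then 5 else 12)) :
    (hatGraph G P).Adj (Sum.inr x) (Sum.inl u) ↔ u = x.1 := by
  rw [SimpleGraph.adj_comm, hat_adj_inl_inr]

lemma hat_adj_inr_inr (x y : Σ v : V, Fin (if P v then 5 else 12)) :
    ¬ (hatGraph G P).Adj (Sum.inr x) (Sum.inr y) := by
  rw [hatGraph, SimpleGraph.fromRel_adj]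
  rintro ⟨-, h | h⟩ <;> exact h

lemma hat_nbr_inl (v : V) :
    (hatGraph G P).neighborSet (Sum.inl v) =
      Sum.inl '' G.neighborSet v ∪
        Set.range (fun i : Fin (if P v then 5 else 12) => Sum.inr ⟨v, i⟩) := by
  ext y
  cases y with
  | inl u =>
    simp only [mem_neighborSet, hat_adj_inl_inl, Set.mem_union, Set.mem_image, Set.mem_range]
    constructor
    · intro h; exact Or.inl ⟨u, h, rfl⟩
    · rintro (⟨u', h, he⟩ | ⟨i, he⟩)
      · cases he; exact h
      · exact absurd he (by simp)
  | inr x =>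
    simp only [mem_neighborSet, hat_adj_inl_inr, Set.mem_union, Set.mem_image, Set.mem_range]
    constructor
    · rintro rfl
      exact Or.inr ⟨x.2, rfl⟩
    · rintro (⟨u', h, he⟩ | ⟨i, he⟩)
      · exact absurd he (by simp)
      · obtain ⟨rfl⟩ := Sum.inr_injective he
        rfl

lemma hat_nbr_inr (x : Σ v : V, Fin (if P v then 5 else 12)) :
    (hatGraph G P).neighborSet (Sum.inr x) = {Sum.inl x.1} := by
  ext y
  cases y with
  | inl u =>
    simp only [mem_neighborSet, hat_adj_inr_inl, Set.mem_singleton_iff, Sum.inl.injEq]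
  | inr z =>
    simp only [mem_neighborSet, Set.mem_singleton_iff]
    constructor
    · intro h; exact absurd h (hat_adj_inr_inr G P x z)
    · intro h; exact absurd h (by simp)

lemma hat_nbr_inl_ncard [Finite V] (v : V) :
    ((hatGraph G P).neighborSet (Sum.inl v)).ncard =
      (G.neighborSet v).ncard + (if P v then 5 else 12) := by
  rw [hat_nbr_inl]
  rw [Set.ncard_union_eq ?disj (Set.toFinite _) (Set.toFinite _)]
  case disj =>
    rw [Set.disjoint_left]
    rintro a ⟨u, -, rfl⟩ ⟨i, hi⟩
    exact absurd hi (by simp)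
  congr 1
  · exact Set.ncard_image_of_injective _ Sum.inl_injective
  · have hinj : Function.Injective
        (fun i : Fin (if P v then 5 else 12) =>
          Sum.inr (α := V) (⟨v, i⟩ : Σ v : V, Fin (if P v then 5 else 12))) :=
      Sum.inr_injective.comp sigma_mk_injective
    rw [← Set.image_univ, Set.ncard_image_of_injective _ hinj, Set.ncard_univ,
      Nat.card_eq_fintype_card, Fintype.card_fin]

end HatLemmas

/-- Let `G` be a 3-regular bipartite graph on `2k` vertices (`k ≥ 2`)
with bipartition into independent sets `A`, `B` of size `k`, and let `Ĝ = hatGraph G (· ∈ A)`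
and `Ĥ = hatGraph (Hk k) (even)` be the graphs obtained by attaching pendant leaves.
For every bijection `π : V(Ĝ) ≃ V(Ĥ)`:
(1) if a leaf of `Ĝ` is mapped to an original vertex of `H_k`, then `MMC(π) > 6`;
(2) if a vertex of `A` is mapped to an odd vertex of `H_k`, then `MMC(π) > 6`;
(3) if `π` restricts to `σ : V(G) ≃ V(H_k)` with `σ(A) = Even(2k)`, `σ(B) = Odd(2k)` and
maps each leaf `v^[i]` to `σ(v)^[i]`, then `MMC(π) = MMC(σ) ≤ 6`. -/
theorem statement_6 {V : Type*} [Fintype V] [DecidableEq V] (k : ℕ) (hk : 2 ≤ k)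
    (G : SimpleGraph V) [DecidableRel G.Adj] (A B : Finset V)
    (hcard : Fintype.card V = 2 * k) (hA : A.card = k) (hB : B.card = k)
    (hUnion : ∀ v, v ∈ A ∨ v ∈ B) (hDisj : Disjoint A B)
    (hreg : G.IsRegularOfDegree 3)
    (hAind : ∀ u ∈ A, ∀ v ∈ A, ¬ G.Adj u v) (hBind : ∀ u ∈ B, ∀ v ∈ B, ¬ G.Adj u v)
    (π : (V ⊕ Σ v : V, Fin (if v ∈ A then 5 else 12)) ≃
      (Fin (2 * k) ⊕ Σ w : Fin (2 * k), Fin (if w.val % 2 = 0 then 5 else 12))) :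
    (∀ (x : Σ v : V, Fin (if v ∈ A then 5 else 12)) (w : Fin (2 * k)),
        π (Sum.inr x) = Sum.inl w →
        6 < MMC (hatGraph G (· ∈ A)) (hatGraph (Hk k) (fun w => w.val % 2 = 0)) π) ∧
    (∀ v ∈ A, ∀ w : Fin (2 * k), π (Sum.inl v) = Sum.inl w → w.val % 2 = 1 →
        6 < MMC (hatGraph G (· ∈ A)) (hatGraph (Hk k) (fun w => w.val % 2 = 0)) π) ∧
    (∀ σ : V ≃ Fin (2 * k), (∀ v, π (Sum.inl v) = Sum.inl (σ v)) → InRes k A σ →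
      (∀ (v : V) (i : Fin (if v ∈ A then 5 else 12)),
        ∃ j : Fin (if (σ v).val % 2 = 0 then 5 else 12),
          π (Sum.inr ⟨v, i⟩) = Sum.inr ⟨σ v, j⟩ ∧ (j : ℕ) = (i : ℕ)) →
      MMC (hatGraph G (· ∈ A)) (hatGraph (Hk k) (fun w => w.val % 2 = 0)) π
          = MMC G (Hk k) σ ∧ MMC G (Hk k) σ ≤ 6) := by
  classical
  have hdeg3 : ∀ v : V, (G.neighborSet v).ncard = 3 := by
    intro v
    rw [← Nat.card_coe_set_eq, Nat.card_eq_fintype_card,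
      SimpleGraph.card_neighborSet_eq_degree]
    exact hreg v
  refine ⟨?_, ?_, ?_⟩
  · -- part 1
    intro x w hx
    have hsymm : π.symm (Sum.inl w) = Sum.inr x := by
      rw [← hx, Equiv.symm_apply_apply]
    have hG : (((hatGraph G (· ∈ A)).map π.toEmbedding).neighborSet (Sum.inl w)).ncard = 1 := by
      rw [mapEquiv_nbr_ncard, hsymm, hat_nbr_inr, Set.ncard_singleton]
    have hH : 8 ≤ ((hatGraph (Hk k) (fun w => w.val % 2 = 0)).neighborSet
        (Sum.inl w)).ncard := by
      rw [hat_nbr_inl_ncard]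
      have := Hk_deg_ge hk w
      split_ifs <;> omega
    have hlow := le_mismatchDeg (hatGraph G (· ∈ A))
      (hatGraph (Hk k) (fun w => w.val % 2 = 0)) π (Sum.inl w)
    have hmmc : mismatchDeg (hatGraph G (· ∈ A)) (hatGraph (Hk k) (fun w => w.val % 2 = 0))
        π (Sum.inl w) ≤ MMC (hatGraph G (· ∈ A)) (hatGraph (Hk k) (fun w => w.val % 2 = 0)) π :=
      Finset.le_sup (Finset.mem_univ _)
    omega
  · -- part 2
    intro v hv w hw hodd
    have hsymm : π.symm (Sum.inl w) = Sum.inl v := by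
      rw [← hw, Equiv.symm_apply_apply]
    have hG : (((hatGraph G (· ∈ A)).map π.toEmbedding).neighborSet (Sum.inl w)).ncard = 8 := by
      rw [mapEquiv_nbr_ncard, hsymm, hat_nbr_inl_ncard, if_pos hv, hdeg3]
    have hH : 15 ≤ ((hatGraph (Hk k) (fun w => w.val % 2 = 0)).neighborSet
        (Sum.inl w)).ncard := by
      rw [hat_nbr_inl_ncard]
      have := Hk_deg_ge hk w
      rw [if_neg (by omega)]
      omega
    have hlow := le_mismatchDeg (hatGraph G (· ∈ A))
      (hatGraph (Hk k) (fun w => w.val % 2 = 0)) π (Sum.inl w)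
    have hmmc : mismatchDeg (hatGraph G (· ∈ A)) (hatGraph (Hk k) (fun w => w.val % 2 = 0))
        π (Sum.inl w) ≤ MMC (hatGraph G (· ∈ A)) (hatGraph (Hk k) (fun w => w.val % 2 = 0)) π :=
      Finset.le_sup (Finset.mem_univ _)
    omega
  · -- part 3
    intro σ hσ hres hleaf
    have hsymm_inl : ∀ w : Fin (2*k), π.symm (Sum.inl w) = Sum.inl (σ.symm w) := by
      intro w
      rw [Equiv.symm_apply_eq, hσ, Equiv.apply_symm_apply]
    have hsymm_inr : ∀ v : V, ∀ j : Fin (if (σ v).val % 2 = 0 then 5 else 12),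
        ∃ i : Fin (if v ∈ A then 5 else 12),
          π.symm (Sum.inr ⟨σ v, j⟩) = Sum.inr ⟨v, i⟩ := by
      intro v j
      have hcount : (if v ∈ A then 5 else 12) = (if (σ v).val % 2 = 0 then 5 else 12) := by
        by_cases hv : v ∈ A
        · rw [if_pos hv, if_pos ((hres v).mp hv)]
        · rw [if_neg hv, if_neg (fun h => hv ((hres v).mpr h))]
      refine ⟨⟨j.val, by rw [hcount]; exact j.isLt⟩, ?_⟩
      obtain ⟨j', hj', hjv⟩ := hleaf v ⟨j.val, by rw [hcount]; exact j.isLt⟩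
      have hj'j : j' = j := Fin.ext (by rw [hjv])
      rw [Equiv.symm_apply_eq, hj', hj'j]
    -- adjacency characterization of the hat mismatch graph
    have hmadj : ∀ x y, (mismatchGraph (hatGraph G (· ∈ A))
        (hatGraph (Hk k) (fun w => w.val % 2 = 0)) π).Adj x y ↔
        ∃ a b, (mismatchGraph G (Hk k) σ).Adj a b ∧ x = Sum.inl a ∧ y = Sum.inl b := by
      intro x y
      rw [mismatch_adj]
      constructor
      · intro h
        match x, y with
        | Sum.inl a, Sum.inl b =>
          refine ⟨a, b, ?_, rfl, rfl⟩
          rw [mismatch_adj]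
          rw [hsymm_inl, hsymm_inl, hat_adj_inl_inl, hat_adj_inl_inl] at h
          exact h
        | Sum.inl a, Sum.inr x =>
          exfalso
          obtain ⟨w', j⟩ := x
          obtain ⟨v, rfl⟩ : ∃ v, w' = σ v := ⟨σ.symm w', (σ.apply_symm_apply w').symm⟩
          obtain ⟨i, hi⟩ := hsymm_inr v j
          rw [hsymm_inl, hi, hat_adj_inl_inr, hat_adj_inl_inr] at h
          simp only [Equiv.symm_apply_eq] at h
          tauto
        | Sum.inr x, Sum.inl b =>
          exfalso
          obtain ⟨w', j⟩ := x
          obtain ⟨v, rfl⟩ : ∃ v, w' = σ v := ⟨σ.symm w', (σ.apply_symm_apply w').symm⟩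
          obtain ⟨i, hi⟩ := hsymm_inr v j
          rw [hsymm_inl, hi, hat_adj_inr_inl, hat_adj_inr_inl] at h
          simp only [Equiv.symm_apply_eq] at h
          tauto
        | Sum.inr x, Sum.inr z =>
          exfalso
          obtain ⟨w', j⟩ := x
          obtain ⟨v, rfl⟩ : ∃ v, w' = σ v := ⟨σ.symm w', (σ.apply_symm_apply w').symm⟩
          obtain ⟨i, hi⟩ := hsymm_inr v j
          obtain ⟨w2, j2⟩ := z
          obtain ⟨v2, rfl⟩ : ∃ v2, w2 = σ v2 := ⟨σ.symm w2, (σ.apply_symm_apply w2).symm⟩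
          obtain ⟨i2, hi2⟩ := hsymm_inr v2 j2
          rw [hi, hi2] at h
          rcases h with ⟨h, -⟩ | ⟨h, -⟩
          · exact hat_adj_inr_inr _ _ _ _ h
          · exact hat_adj_inr_inr _ _ _ _ h
      · rintro ⟨a, b, hab, rfl, rfl⟩
        rw [mismatch_adj] at hab
        rw [hsymm_inl, hsymm_inl, hat_adj_inl_inl, hat_adj_inl_inl]
        exact hab
    have hdeg_inl : ∀ w : Fin (2*k),
        mismatchDeg (hatGraph G (· ∈ A)) (hatGraph (Hk k) (fun w => w.val % 2 = 0)) π
          (Sum.inl w) = mismatchDeg G (Hk k) σ w := by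
      intro w
      unfold mismatchDeg
      have : (mismatchGraph (hatGraph G (· ∈ A))
          (hatGraph (Hk k) (fun w => w.val % 2 = 0)) π).neighborSet (Sum.inl w) =
          Sum.inl '' (mismatchGraph G (Hk k) σ).neighborSet w := by
        ext y
        simp only [mem_neighborSet, Set.mem_image]
        rw [hmadj]
        constructor
        · rintro ⟨a, b, hab, ha, rfl⟩
          obtain rfl : a = w := (Sum.inl_injective ha).symm
          exact ⟨b, hab, rfl⟩
        · rintro ⟨b, hb, rfl⟩
          exact ⟨w, b, hb, rfl, rfl⟩
      rw [this, Set.ncard_image_of_injective _ Sum.inl_injective]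
    have hdeg_inr : ∀ x, mismatchDeg (hatGraph G (· ∈ A))
        (hatGraph (Hk k) (fun w => w.val % 2 = 0)) π (Sum.inr x) = 0 := by
      intro x
      unfold mismatchDeg
      have : (mismatchGraph (hatGraph G (· ∈ A))
          (hatGraph (Hk k) (fun w => w.val % 2 = 0)) π).neighborSet (Sum.inr x) = ∅ := by
        ext y
        simp only [mem_neighborSet, Set.mem_empty_iff_false, iff_false]
        rw [hmadj]
        rintro ⟨a, b, -, h, -⟩
        exact absurd h (by simp)
      rw [this, Set.ncard_empty]
    have hle6 : MMC G (Hk k) σ ≤ 6 := by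
      refine Finset.sup_le fun w _ => ?_
      have h1 := mismatchDeg_le G (Hk k) σ w
      have h2 := Hk_deg_le hk w
      have h3 : ((G.map σ.toEmbedding).neighborSet w).ncard = 3 := by
        rw [mapEquiv_nbr_ncard]; exact hdeg3 _
      omega
    refine ⟨le_antisymm ?_ ?_, hle6⟩
    · refine Finset.sup_le fun x _ => ?_
      cases x with
      | inl w =>
        rw [hdeg_inl w]
        exact Finset.le_sup (Finset.mem_univ w)
      | inr z =>
        rw [hdeg_inr z]
        exact Nat.zero_le _
    · refine Finset.sup_le fun w _ => ?_
      rw [← hdeg_inl w]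
      exact Finset.le_sup (Finset.mem_univ _)
end

section
/- Let k ≥ 2 be odd, let G_k be a 3-regular bipartite graph on 2k vertices with bipartition into independent sets A and B of size k, and let H_k be as constructed. If G_k has no Hamiltonian cycle, then every σ ∈ Res(G_k, H_k) satisfies MMC(σ) ≥ 4, where MMC(σ) is the maximum degree of a vertex of the mismatch graph G_k^σ − H_k. -/
open SimpleGraph

/-! ### Auxiliary lemmas -/

section AuxCycle

open SimpleGraph
open Fin.NatCast

/-- A descending walk `m, m-1, …, 0` in a graph on `Fin n` containing all successor edges. -/
def descWalk {n : ℕ} [NeZero n] (Γ : SimpleGraph (Fin n)) (h : ∀ x : Fin n, Γ.Adj x (x + 1)) :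
    (m : ℕ) → Γ.Walk (m : Fin n) (0 : Fin n)
  | 0 => Walk.nil
  | m + 1 => Walk.cons
      (by have := (h (m : Fin n)).symm
          rwa [show ((m : Fin n) + 1) = ((m + 1 : ℕ) : Fin n) by push_cast; ring] at this)
      (descWalk Γ h m)

lemma descWalk_support {n : ℕ} [NeZero n] (Γ : SimpleGraph (Fin n))
    (h : ∀ x : Fin n, Γ.Adj x (x + 1)) (m : ℕ) :
    (descWalk Γ h m).support = (List.range (m + 1)).reverse.map (Nat.cast : ℕ → Fin n) := by
  induction m with
  | zero => simp [descWalk, List.range_succ]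
  | succ m ih =>
      rw [descWalk, Walk.support_cons, ih]
      conv_rhs => rw [List.range_succ]
      simp

lemma descWalk_edges {n : ℕ} [NeZero n] (Γ : SimpleGraph (Fin n))
    (h : ∀ x : Fin n, Γ.Adj x (x + 1)) (m : ℕ) (hn : 6 ≤ n) (hm : m < n) :
    s((0 : Fin n), ((n - 1 : ℕ) : Fin n)) ∉ (descWalk Γ h m).edges := by
  induction m with
  | zero => simp [descWalk]
  | succ m ih =>
      rw [descWalk, Walk.edges_cons]
      intro hmem
      rcases List.mem_cons.1 hmem with heq | hmem'
      · rw [Sym2.eq_iff] at heq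
        have hm1 : ((m + 1 : ℕ) : Fin n).val = m + 1 := by
          rw [Fin.val_natCast]; exact Nat.mod_eq_of_lt (by omega)
        have hm0 : ((m : ℕ) : Fin n).val = m := by
          rw [Fin.val_natCast]; exact Nat.mod_eq_of_lt (by omega)
        have hn1 : ((n - 1 : ℕ) : Fin n).val = n - 1 := by
          rw [Fin.val_natCast]; exact Nat.mod_eq_of_lt (by omega)
        rcases heq with ⟨h1, h2⟩ | ⟨h1, h2⟩
        · have := congrArg Fin.val h1
          simp only [Fin.val_zero, hm1] at this; omega
        · have e1 := congrArg Fin.val h1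
          have e2 := congrArg Fin.val h2
          simp only [Fin.val_zero, hm0, hn1, hm1] at e1 e2; omega
      · exact ih (by omega) hmem'

lemma ham_aux {n : ℕ} [NeZero n] (hn : 6 ≤ n) (Γ : SimpleGraph (Fin n))
    (h : ∀ x : Fin n, Γ.Adj x (x + 1)) :
    ∃ (a : Fin n) (p : Γ.Walk a a), p.IsHamiltonianCycle := by
  have e : ((n - 1 : ℕ) : Fin n) + 1 = (0 : Fin n) := by
    rw [show ((n - 1 : ℕ) : Fin n) + 1 = ((n - 1 + 1 : ℕ) : Fin n) by push_cast; ring,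
      Nat.sub_add_cancel (by omega), Fin.natCast_self]
  have h0 : Γ.Adj (0 : Fin n) ((n - 1 : ℕ) : Fin n) := by
    have t := (h ((n - 1 : ℕ) : Fin n)).symm
    rw [e] at t; exact t
  have hsupp := descWalk_support Γ h (n - 1)
  have hnodup : (descWalk Γ h (n - 1)).support.Nodup := by
    rw [hsupp]
    refine List.Nodup.map_on ?_ (List.nodup_reverse.2 List.nodup_range)
    intro a ha b hb hab
    rw [List.mem_reverse, List.mem_range] at ha hb
    have := congrArg Fin.val hab
    rw [Fin.val_natCast, Fin.val_natCast, Nat.mod_eq_of_lt (by omega),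
      Nat.mod_eq_of_lt (by omega)] at this
    exact this
  have hpath : (descWalk Γ h (n - 1)).IsPath := Walk.IsPath.mk' hnodup
  refine ⟨(0 : Fin n), Walk.cons h0 (descWalk Γ h (n - 1)), ?_⟩
  rw [Walk.isHamiltonianCycle_iff_isCycle_and_support_count_tail_eq_one]
  constructor
  · exact SimpleGraph.Path.cons_isCycle ⟨descWalk Γ h (n - 1), hpath⟩ h0
      (descWalk_edges Γ h (n - 1) hn (by omega))
  · intro a
    rw [Walk.support_cons, List.tail_cons, hsupp, Nat.sub_add_cancel (by omega)]
    refine List.count_eq_one_of_mem ?_ ?_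
    · refine List.Nodup.map_on ?_ (List.nodup_reverse.2 List.nodup_range)
      intro x hx y hy hxy
      rw [List.mem_reverse, List.mem_range] at hx hy
      have := congrArg Fin.val hxy
      rw [Fin.val_natCast, Fin.val_natCast, Nat.mod_eq_of_lt (by omega),
        Nat.mod_eq_of_lt (by omega)] at this
      exact this
    · refine List.mem_map.2 ⟨a.val, ?_, ?_⟩
      · rw [List.mem_reverse, List.mem_range]; exact a.isLt
      · simp

end AuxCycle

section AuxHk

lemma fin_val_add_one' {n : ℕ} [NeZero n] (hn : 2 ≤ n) (x : Fin n) :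
    (x + 1).val = (x.val + 1) % n := by
  rw [Fin.add_def, Fin.val_one', Nat.mod_eq_of_lt hn]

lemma hk_adj_succ {k : ℕ} [NeZero (2 * k)] (hk : 2 ≤ k) (x : Fin (2 * k)) :
    (Hk k).Adj x (x + 1) := by
  have hv := fin_val_add_one' (n := 2 * k) (by omega) x
  rw [Hk, SimpleGraph.fromRel_adj]
  rcases Nat.lt_or_ge (x.val + 1) (2 * k) with hlt | hge
  · rw [Nat.mod_eq_of_lt hlt] at hv
    exact ⟨by intro hxy; rw [← hxy] at hv; omega, Or.inl (Or.inl hv)⟩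
  · have := x.isLt
    have hx : x.val = 2 * k - 1 := by omega
    have h2k : x.val + 1 = 2 * k := by omega
    have h0 : (x + 1).val = 0 := by rw [hv, h2k, Nat.mod_self]
    exact ⟨by intro hxy; rw [← hxy] at h0; omega, Or.inl (Or.inr (Or.inl ⟨hx, h0⟩))⟩

set_option maxHeartbeats 1000000 in
lemma hk_chord {k : ℕ} (hk : 2 ≤ k) (hko : k % 2 = 1) (x : Fin (2 * k))
    (h1 : x.val ≠ 1) (h2 : x.val ≠ 2 * k - 2) :
    ∃ c : Fin (2 * k), (Hk k).Adj x c ∧ c.val % 2 = x.val % 2 := by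
  have hxlt := x.isLt
  have hko' : ¬ (k % 2 = 0) := by omega
  have h4 : 2 * k % 4 = 2 := by omega
  have hr : x.val % 4 = 0 ∨ x.val % 4 = 1 ∨ x.val % 4 = 2 ∨ x.val % 4 = 3 := by omega
  rcases hr with hr | hr | hr | hr
  · have hb : x.val + 2 < 2 * k := by omega
    refine ⟨⟨x.val + 2, hb⟩, ?_, show (x.val + 2) % 2 = x.val % 2 by omega⟩
    rw [Hk, SimpleGraph.fromRel_adj]
    simp only [if_neg hko']
    exact ⟨Fin.ne_of_val_ne (show x.val ≠ x.val + 2 by omega),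
      Or.inr (Or.inr (Or.inr (Or.inl ⟨show (x.val + 2) % 4 = 2 by omega,
        show x.val = (x.val + 2) - 2 by omega⟩)))⟩
  · have hx5 : 5 ≤ x.val := by omega
    refine ⟨⟨x.val - 2, by omega⟩, ?_, show (x.val - 2) % 2 = x.val % 2 by omega⟩
    rw [Hk, SimpleGraph.fromRel_adj]
    simp only [if_neg hko']
    exact ⟨Fin.ne_of_val_ne (show x.val ≠ x.val - 2 by omega),
      Or.inr (Or.inr (Or.inr (Or.inr (Or.inl ⟨show (x.val - 2) % 4 = 3 by omega,
        show x.val = (x.val - 2) + 2 by omega⟩))))⟩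
  · refine ⟨⟨x.val - 2, by omega⟩, ?_, show (x.val - 2) % 2 = x.val % 2 by omega⟩
    rw [Hk, SimpleGraph.fromRel_adj]
    simp only [if_neg hko']
    exact ⟨Fin.ne_of_val_ne (show x.val ≠ x.val - 2 by omega),
      Or.inl (Or.inr (Or.inr (Or.inl ⟨hr, trivial⟩)))⟩
  · have hb : x.val + 2 < 2 * k := by omega
    refine ⟨⟨x.val + 2, hb⟩, ?_, show (x.val + 2) % 2 = x.val % 2 by omega⟩
    rw [Hk, SimpleGraph.fromRel_adj]
    simp only [if_neg hko']
    exact ⟨Fin.ne_of_val_ne (show x.val ≠ x.val + 2 by omega),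
      Or.inl (Or.inr (Or.inr (Or.inr (Or.inl ⟨hr, trivial⟩))))⟩

set_option maxHeartbeats 1000000 in
lemma hk_cross {k : ℕ} [NeZero (2 * k)] (hk : 2 ≤ k) (hko : k % 2 = 1) (x y : Fin (2 * k))
    (hadj : (Hk k).Adj x y) (hpar : x.val % 2 ≠ y.val % 2) :
    y = x + 1 ∨ y = x - 1 ∨ (x.val = 1 ∧ y.val = 2 * k - 2) ∨
      (x.val = 2 * k - 2 ∧ y.val = 1) := by
  have hxlt := x.isLt
  have hylt := y.isLt
  have hko' : ¬ (k % 2 = 0) := by omega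
  have hvx := fin_val_add_one' (n := 2 * k) (by omega) x
  have hvy := fin_val_add_one' (n := 2 * k) (by omega) y
  rw [Hk, SimpleGraph.fromRel_adj] at hadj
  simp only [if_neg hko'] at hadj
  obtain ⟨hne, hrel⟩ := hadj
  have hsucc : y.val = x.val + 1 → y = x + 1 := by
    intro h; apply Fin.ext; rw [hvx, Nat.mod_eq_of_lt (by omega), h]
  have hsucc0 : x.val = 2 * k - 1 → y.val = 0 → y = x + 1 := by
    intro h h'
    apply Fin.ext
    rw [hvx, h', h, Nat.sub_add_cancel (by omega), Nat.mod_self]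
  have hpred : x.val = y.val + 1 → y = x - 1 := by
    intro h
    refine eq_sub_of_add_eq (Fin.ext ?_)
    rw [hvy, Nat.mod_eq_of_lt (by omega), h]
  have hpred0 : y.val = 2 * k - 1 → x.val = 0 → y = x - 1 := by
    intro h h'
    refine eq_sub_of_add_eq (Fin.ext ?_)
    rw [hvy, h, h', Nat.sub_add_cancel (by omega), Nat.mod_self]
  rcases hrel with (h | ⟨ha, hb⟩ | ⟨ha, hb⟩ | ⟨ha, hb⟩ | ⟨ha, hb⟩) |
    (h | ⟨ha, hb⟩ | ⟨ha, hb⟩ | ⟨ha, hb⟩ | ⟨ha, hb⟩)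
  · exact Or.inl (hsucc h)
  · exact Or.inl (hsucc0 ha hb)
  · omega
  · omega
  · exact Or.inr (Or.inr (Or.inr ⟨ha, hb⟩))
  · exact Or.inr (Or.inl (hpred h))
  · exact Or.inr (Or.inl (hpred0 ha hb))
  · omega
  · omega
  · exact Or.inr (Or.inr (Or.inl ⟨hb, ha⟩))

end AuxHk

section AuxCount

open SimpleGraph

lemma mismatch_neighborSet {V W : Type*} (G : SimpleGraph V) (H : SimpleGraph W) (π : V ≃ W)
    (x : W) :
    (mismatchGraph G H π).neighborSet x =
      ((G.map π.toEmbedding).neighborSet x \ H.neighborSet x) ∪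
        (H.neighborSet x \ (G.map π.toEmbedding).neighborSet x) := by
  ext y
  simp only [mismatchGraph, symmDiff_def, SimpleGraph.mem_neighborSet, SimpleGraph.sup_adj,
    SimpleGraph.sdiff_adj, Set.mem_union, Set.mem_diff, SimpleGraph.mem_neighborSet]

lemma mismatch_helper {V W : Type*} [Fintype W] (G : SimpleGraph V) (H : SimpleGraph W)
    (σ : V ≃ W) (x w z1 z2 : W)
    (h3 : ((G.map σ.toEmbedding).neighborSet x).ncard = 3)
    (hz1H : z1 ∈ H.neighborSet x) (hz2H : z2 ∈ H.neighborSet x)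
    (hz1G : z1 ∉ (G.map σ.toEmbedding).neighborSet x)
    (hz2G : z2 ∉ (G.map σ.toEmbedding).neighborSet x)
    (hne : z1 ≠ z2)
    (hcap : ∀ y, y ∈ (G.map σ.toEmbedding).neighborSet x → y ∈ H.neighborSet x → y = w) :
    4 ≤ mismatchDeg G H σ x := by
  classical
  set NG := (G.map σ.toEmbedding).neighborSet x with hNG
  set NH := H.neighborSet x with hNH
  have hfin : ∀ s : Set W, s.Finite := fun s => s.toFinite
  have hsub : NG ∩ NH ⊆ {w} := fun y hy => hcap y hy.1 hy.2
  have hcapcard : (NG ∩ NH).ncard ≤ 1 := by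
    calc (NG ∩ NH).ncard ≤ ({w} : Set W).ncard := Set.ncard_le_ncard hsub (Set.finite_singleton w)
    _ = 1 := Set.ncard_singleton w
  have hsplit : (NG \ NH).ncard + (NG ∩ NH).ncard = NG.ncard := by
    rw [← Set.ncard_union_eq (Set.disjoint_left.mpr (fun y hy h2 => hy.2 h2.2)) (hfin _) (hfin _),
      Set.diff_union_inter]
  have hdiff2 : 2 ≤ (NH \ NG).ncard := by
    have hsub2 : ({z1, z2} : Set W) ⊆ NH \ NG := by
      intro y hy
      rcases hy with rfl | rfl
      · exact ⟨hz1H, hz1G⟩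
      · exact ⟨hz2H, hz2G⟩
    calc 2 = ({z1, z2} : Set W).ncard := (Set.ncard_pair hne).symm
    _ ≤ (NH \ NG).ncard := Set.ncard_le_ncard hsub2 (hfin _)
  have hdeg : mismatchDeg G H σ x = (NG \ NH).ncard + (NH \ NG).ncard := by
    rw [mismatchDeg, mismatch_neighborSet,
      Set.ncard_union_eq (Set.disjoint_left.mpr (fun y hy h2 => h2.2 hy.1)) (hfin _) (hfin _)]
  omega

end AuxCount

/-- Let `k ≥ 2` be odd, and let `G` be a 3-regular bipartite graph on
`2k` vertices with bipartition into independent sets `A`, `B` of size `k`. If `G` has no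
Hamiltonian cycle, then every `σ ∈ Res(G, H_k)` satisfies `MMC(σ) ≥ 4`. -/
theorem statement_9 {V : Type*} [Fintype V] [DecidableEq V] (k : ℕ) (hk : 2 ≤ k)
    (hkpar : Odd k)
    (G : SimpleGraph V) [DecidableRel G.Adj] (A B : Finset V)
    (hcard : Fintype.card V = 2 * k) (hA : A.card = k) (hB : B.card = k)
    (hUnion : ∀ v, v ∈ A ∨ v ∈ B) (hDisj : Disjoint A B)
    (hreg : G.IsRegularOfDegree 3)
    (hAind : ∀ u ∈ A, ∀ v ∈ A, ¬ G.Adj u v) (hBind : ∀ u ∈ B, ∀ v ∈ B, ¬ G.Adj u v)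
    (hHam : ¬ G.IsHamiltonian) :
    ∀ σ : V ≃ Fin (2 * k), InRes k A σ → 4 ≤ MMC G (Hk k) σ := by
    classical
  intro σ hres
  by_contra hlt
  push_neg at hlt
  have hko : k % 2 = 1 := Nat.odd_iff.mp hkpar
  have hk3 : 3 ≤ k := by omega
  haveI : NeZero (2 * k) := ⟨by omega⟩
  -- every vertex has mismatch degree at most 3
  have hdeg3 : ∀ x : Fin (2 * k), mismatchDeg G (Hk k) σ x ≤ 3 := by
    intro x
    have hle : mismatchDeg G (Hk k) σ x ≤ MMC G (Hk k) σ :=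
      Finset.le_sup (Finset.mem_univ x)
    omega
  -- parity of mapped edges
  have hpar : ∀ x y : Fin (2 * k), (G.map σ.toEmbedding).Adj x y → x.val % 2 ≠ y.val % 2 := by
    intro x y hxy
    rw [SimpleGraph.map_adj] at hxy
    obtain ⟨u, v, huv, hu, hv⟩ := hxy
    subst hu; subst hv
    simp only [Equiv.coe_toEmbedding]
    rcases hUnion u with hAu | hBu <;> rcases hUnion v with hAv | hBv
    · exact absurd huv (hAind u hAu v hAv)
    · have h1 : (σ u).val % 2 = 0 := (hres u).mp hAu
      have h2 : ¬ (σ v).val % 2 = 0 := fun h => (Finset.disjoint_left.mp hDisj ((hres v).mpr h)) hBv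
      omega
    · have h1 : (σ v).val % 2 = 0 := (hres v).mp hAv
      have h2 : ¬ (σ u).val % 2 = 0 := fun h => (Finset.disjoint_left.mp hDisj ((hres u).mpr h)) hBu
      omega
    · exact absurd huv (hBind u hBu v hBv)
  -- degree of mapped graph
  have hNG3 : ∀ x : Fin (2 * k), ((G.map σ.toEmbedding).neighborSet x).ncard = 3 := by
    intro x
    have himg : (G.map σ.toEmbedding).neighborSet x = σ '' (G.neighborSet (σ.symm x)) := by
      ext y
      simp only [SimpleGraph.mem_neighborSet, SimpleGraph.map_adj, Set.mem_image]
      constructor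
      · rintro ⟨u, v, huv, hu, hv⟩
        refine ⟨v, ?_, hv⟩
        have : σ.symm x = u := by rw [← hu]; exact σ.symm_apply_apply u
        rwa [this]
      · rintro ⟨v, hv, rfl⟩
        exact ⟨σ.symm x, v, hv, σ.apply_symm_apply x, rfl⟩
    rw [himg, Set.ncard_image_of_injective _ σ.injective]
    have : (G.neighborSet (σ.symm x)).ncard = G.degree (σ.symm x) := by
      rw [Set.ncard_eq_toFinset_card']
      rfl
    rw [this]
    exact hreg (σ.symm x)
  -- main claim at "good" vertices
  have key : ∀ x : Fin (2 * k), x.val ≠ 1 → x.val ≠ 2 * k - 2 →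
      (G.map σ.toEmbedding).Adj x (x + 1) ∧ (G.map σ.toEmbedding).Adj x (x - 1) := by
    intro x hg1 hg2
    obtain ⟨c, hcH, hcpar⟩ := hk_chord hk hko x hg1 hg2
    have hxp1H : (Hk k).Adj x (x + 1) := hk_adj_succ hk x
    have hxm1H : (Hk k).Adj x (x - 1) := by
      have := hk_adj_succ hk (x - 1)
      rw [sub_add_cancel] at this
      exact this.symm
    have hcG : c ∉ (G.map σ.toEmbedding).neighborSet x := by
      intro h
      exact hpar x c h hcpar.symm
    -- parity of x+1
    have hvx := fin_val_add_one' (n := 2 * k) (by omega) x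
    have hp1 : (x + 1).val % 2 ≠ x.val % 2 := by
      rcases Nat.lt_or_ge (x.val + 1) (2 * k) with hlt' | hge'
      · rw [Nat.mod_eq_of_lt hlt'] at hvx
        omega
      · have hxl := x.isLt
        have h2k : x.val + 1 = 2 * k := by omega
        rw [h2k, Nat.mod_self] at hvx
        omega
    -- parity of x-1
    have hy1 : (x - 1) + 1 = x := sub_add_cancel x 1
    have hvy := fin_val_add_one' (n := 2 * k) (by omega) (x - 1)
    have hvy' : x.val = ((x - 1).val + 1) % (2 * k) := by
      conv_lhs => rw [← hy1]
      exact hvy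
    have hm1 : (x - 1).val % 2 ≠ x.val % 2 := by
      rcases Nat.lt_or_ge ((x - 1).val + 1) (2 * k) with hlt' | hge'
      · rw [Nat.mod_eq_of_lt hlt'] at hvy'
        omega
      · have hxl := (x - 1).isLt
        have h2k : (x - 1).val + 1 = 2 * k := by omega
        rw [h2k, Nat.mod_self] at hvy'
        omega
    have hcp1 : c ≠ x + 1 := by
      intro h; rw [h] at hcpar; omega
    have hcm1 : c ≠ x - 1 := by
      intro h; rw [h] at hcpar; omega
    constructor
    · by_contra hnot
      have h4 := mismatch_helper G (Hk k) σ x (x - 1) (x + 1) c (hNG3 x) hxp1H hcH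
        hnot hcG (Ne.symm hcp1) ?_
      · have := hdeg3 x; omega
      · intro y hyG hyH
        rcases hk_cross hk hko x y hyH (hpar x y hyG) with h | h | h | h
        · exact absurd (h ▸ hyG) hnot
        · exact h
        · exact absurd h.1 hg1
        · exact absurd h.1 hg2
    · by_contra hnot
      have h4 := mismatch_helper G (Hk k) σ x (x + 1) (x - 1) c (hNG3 x) hxm1H hcH
        hnot hcG (Ne.symm hcm1) ?_
      · have := hdeg3 x; omega
      · intro y hyG hyH
        rcases hk_cross hk hko x y hyH (hpar x y hyG) with h | h | h | h
        · exact h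
        · exact absurd (h ▸ hyG) hnot
        · exact absurd h.1 hg1
        · exact absurd h.1 hg2
  -- all successor edges present
  have hE : ∀ x : Fin (2 * k), (G.map σ.toEmbedding).Adj x (x + 1) := by
    intro x
    by_cases hgood : x.val ≠ 1 ∧ x.val ≠ 2 * k - 2
    · exact (key x hgood.1 hgood.2).1
    · push_neg at hgood
      have hbad : x.val = 1 ∨ x.val = 2 * k - 2 := by
        by_cases h1 : x.val = 1
        · exact Or.inl h1
        · exact Or.inr (hgood h1)
      have hvx := fin_val_add_one' (n := 2 * k) (by omega) x
      have hzval : (x + 1).val = x.val + 1 := by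
        rw [hvx, Nat.mod_eq_of_lt (by omega)]
      have hz1 : (x + 1).val ≠ 1 := by omega
      have hz2 : (x + 1).val ≠ 2 * k - 2 := by omega
      have := (key (x + 1) hz1 hz2).2
      rw [add_sub_cancel_right] at this
      exact this.symm
  -- build a Hamiltonian cycle, contradiction
  obtain ⟨a, p, hp⟩ := ham_aux (n := 2 * k) (by omega) (G.map σ.toEmbedding) hE
  apply hHam
  intro _
  let f : (G.map σ.toEmbedding) →g G :=
    { toFun := σ.symm
      map_rel' := by
        intro a b hab
        rw [SimpleGraph.map_adj] at hab
        obtain ⟨u, v, huv, hu, hv⟩ := hab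
        rw [← hu, ← hv]
        simpa using huv }
  exact ⟨σ.symm a, p.map f, hp.map (f := f) σ.symm.bijective⟩
end
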